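/- With X^{(2k)} as defined recursively (X^{(0)}=1, X even step an indefinite sum of X^{(i-1)}(s)/(p(s)u₀(s)u₀(s+1)), odd step an indefinite sum of u₀(s+1)²X^{(i-1)}(s+1)r(s+1)), the formal power series u₁(n) = u₀(n) Σ_{k=0}^{∞} λ^k X^{(2k)}(n) is a finite sum: for n > n₀ it equals u₀(n) Σ_{k=0}^{n-n₀-1} λ^k X^{(2k)}(n), and for n ≤ n₀ it equals u₀(n) Σ_{k=0}^{n₀-n} λ^k X^{(2k)}(n). -/

import Mathlib

/-- The indefinite sum of `f` vanishing at `n₀`. -/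
noncomputable def istar (n₀ : ℤ) (f : ℤ → ℂ) (n : ℤ) : ℂ :=
  if n₀ ≤ n then ∑ j ∈ Finset.Ico n₀ n, f j else -∑ j ∈ Finset.Ico n n₀, f j

/-- The sequences `X⁽ⁱ⁾`: `X⁽⁰⁾ = 1`, even steps sum `X⁽ⁱ⁻¹⁾(s)/(p(s)u₀(s)u₀(s+1))`,
odd steps sum `u₀(s+1)² X⁽ⁱ⁻¹⁾(s+1) r(s+1)`. -/
noncomputable def Xseq (u₀ p r : ℤ → ℂ) (n₀ : ℤ) : ℕ → ℤ → ℂ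
  | 0 => fun _ => 1
  | i + 1 =>
      if (i + 1) % 2 = 0 then
        istar n₀ (fun s => Xseq u₀ p r n₀ i s / (p s * u₀ s * u₀ (s + 1)))
      else
        istar n₀ (fun s => u₀ (s + 1) ^ 2 * Xseq u₀ p r n₀ i (s + 1) * r (s + 1))

/-- The sequences `Y⁽ⁱ⁾`: `Y⁽⁰⁾ = 1`, with the parity roles exchanged. -/
noncomputable def Yseq (u₀ p r : ℤ → ℂ) (n₀ : ℤ) : ℕ → ℤ → ℂ
  | 0 => fun _ => 1
  | i + 1 =>
      if (i + 1) % 2 = 0 then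
        istar n₀ (fun s => u₀ (s + 1) ^ 2 * Yseq u₀ p r n₀ i (s + 1) * r (s + 1))
      else
        istar n₀ (fun s => Yseq u₀ p r n₀ i s / (p s * u₀ s * u₀ (s + 1)))


lemma istar_zero (n₀ : ℤ) (f : ℤ → ℂ) (m : ℤ)
    (h : ∀ j, (n₀ ≤ j ∧ j < m) ∨ (m ≤ j ∧ j < n₀) → f j = 0) : istar n₀ f m = 0 := by
  unfold istar
  split_ifs with h'
  · exact Finset.sum_eq_zero fun j hj => h j (Or.inl (Finset.mem_Ico.mp hj))
  · rw [Finset.sum_eq_zero fun j hj => h j (Or.inr (Finset.mem_Ico.mp hj)), neg_zero]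

lemma Xvan (u₀ p r : ℤ → ℂ) (n₀ : ℤ) :
    ∀ k : ℕ, (∀ m, n₀ - k + 1 ≤ m → m ≤ n₀ + k → Xseq u₀ p r n₀ (2*k) m = 0) ∧
             (∀ m, n₀ - k ≤ m → m ≤ n₀ + k → Xseq u₀ p r n₀ (2*k+1) m = 0) := by
  intro k
  induction k with
  | zero =>
    refine ⟨fun m h1 h2 => absurd h1 (by push_cast at h2 ⊢; omega), fun m h1 h2 => ?_⟩
    show Xseq u₀ p r n₀ (0+1) m = 0
    rw [Xseq, if_neg (by omega)]
    apply istar_zero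
    intro j hj
    push_cast at h1 h2
    have : False := by omega
    exact this.elim
  | succ k ih =>
    have hA : ∀ m, n₀ - (k+1:ℕ) + 1 ≤ m → m ≤ n₀ + (k+1:ℕ) →
        Xseq u₀ p r n₀ (2*(k+1)) m = 0 := by
      intro m h1 h2
      rw [show (2*(k+1) : ℕ) = (2*k+1)+1 by ring, Xseq, if_pos (by omega)]
      apply istar_zero
      intro j hj
      rw [ih.2 j (by push_cast at h1 h2 ⊢; omega) (by push_cast at h1 h2 ⊢; omega)]
      simp
    refine ⟨hA, fun m h1 h2 => ?_⟩
    rw [show (2*(k+1)+1 : ℕ) = (2*(k+1))+1 from rfl, Xseq, if_neg (by omega)]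
    apply istar_zero
    intro j hj
    rw [hA (j+1) (by push_cast at h1 h2 ⊢; omega) (by push_cast at h1 h2 ⊢; omega)]
    ring

/-- Lemma 1(ii): the power series defining `u₁` is in fact a finite sum. -/
theorem u1_finite_sum (u₀ p r : ℤ → ℂ) (n₀ : ℤ) (lam : ℂ)
    (hp : ∀ n, p n ≠ 0) (hu₀ : ∀ n, u₀ n ≠ 0) :
    ∀ n : ℤ,
      (n₀ < n →
        u₀ n * ∑' k : ℕ, lam ^ k * Xseq u₀ p r n₀ (2 * k) n
          = u₀ n * ∑ k ∈ Finset.range (n - n₀).toNat, lam ^ k * Xseq u₀ p r n₀ (2 * k) n) ∧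
      (n ≤ n₀ →
        u₀ n * ∑' k : ℕ, lam ^ k * Xseq u₀ p r n₀ (2 * k) n
          = u₀ n * ∑ k ∈ Finset.range ((n₀ - n).toNat + 1), lam ^ k * Xseq u₀ p r n₀ (2 * k) n) := by
  intro n
  constructor
  · intro hn
    rw [tsum_eq_sum (s := Finset.range (n - n₀).toNat)]
    intro k hk
    rw [Finset.mem_range, not_lt] at hk
    rw [(Xvan u₀ p r n₀ k).1 n (by push_cast; omega)
      (by have := Int.toNat_of_nonneg (a := n - n₀) (by omega); push_cast; omega), mul_zero]
  · intro hn
    rw [tsum_eq_sum (s := Finset.range ((n₀ - n).toNat + 1))]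
    intro k hk
    rw [Finset.mem_range, not_lt] at hk
    have := Int.toNat_of_nonneg (a := n₀ - n) (by omega)
    rw [(Xvan u₀ p r n₀ k).1 n (by push_cast; omega) (by push_cast; omega), mul_zero]
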